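/- Assume additionally that A has full column rank n (equivalently N(A) = {0}), so that x* is the unique solution of Ax = b and the operator norm ‖T‖ is strictly less than 1. Let x_0 ∈ ℝ^n, r_0 := g − C x_0, and let x_k ∈ x_0 + K_k(C,r_0) satisfy the minimal-residual property ‖x_k − P(x_k)‖ ≤ ‖u − P(u)‖ for all u ∈ x_0 + K_k(C,r_0). Then ‖x_k − x*‖ ≤ ((1 + ‖T‖)/(1 − ‖T‖)) · ‖u − x*‖ for all u ∈ x_0 + K_k(C,r_0). -/

import Mathlib

open scoped RealInnerProductSpace

noncomputable section

abbrev Euc (n : ℕ) := EuclideanSpace ℝ (Fin n)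

/-- Intermediate Kaczmarz chain: `chainK Pj x j` is `y_j` with `y_0 = x`, `y_{j+1} = P_{j+1}(y_j)`. -/
def chainK {n p : ℕ} (Pj : Fin p → Euc n → Euc n) (x : Euc n) : ℕ → Euc n
  | 0 => x
  | j + 1 => if h : j < p then Pj ⟨j, h⟩ (chainK Pj x j) else chainK Pj x j

/-- The block Kaczmarz operator `P = P_p ∘ ⋯ ∘ P_1`. -/
def kacz {n p : ℕ} (Pj : Fin p → Euc n → Euc n) (x : Euc n) : Euc n := chainK Pj x p

/-- `f` sends each point to the (unique) nearest point of `S`. -/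
def IsNearestPointMap {n : ℕ} (S : Set (Euc n)) (f : Euc n → Euc n) : Prop :=
  ∀ x, f x ∈ S ∧ ∀ y ∈ S, dist x (f x) ≤ dist x y

/-- The stacked (full) matrix `A` with blocks `A_j`. -/
def fullA {n p : ℕ} (m : Fin p → ℕ)
    (A : ∀ j : Fin p, Euc n →ₗ[ℝ] Euc (m j)) :
    Euc n →ₗ[ℝ] PiLp 2 (fun j => Euc (m j)) :=
  (WithLp.linearEquiv 2 ℝ (∀ j, Euc (m j))).symm.toLinearMap ∘ₗ LinearMap.pi A

/-- The range of `Aᵀ` for the stacked matrix. -/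
def RAT {n p : ℕ} (m : Fin p → ℕ)
    (A : ∀ j : Fin p, Euc n →ₗ[ℝ] Euc (m j)) : Submodule ℝ (Euc n) :=
  LinearMap.range (LinearMap.adjoint (fullA m A))

/-- Orthogonal projection onto a subspace, as an endomorphism. -/
def projSub {n : ℕ} (K : Submodule ℝ (Euc n)) : Euc n →ₗ[ℝ] Euc n :=
  K.subtype ∘ₗ K.orthogonalProjectionOnto.toLinearMap

/-- `Tchain m A j = Q_j ∘ ⋯ ∘ Q_1`, with `Q_i` the orthogonal projection onto `N(A_i)`. -/
def Tchain {n p : ℕ} (m : Fin p → ℕ)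
    (A : ∀ j : Fin p, Euc n →ₗ[ℝ] Euc (m j)) :
    ℕ → (Euc n →ₗ[ℝ] Euc n)
  | 0 => LinearMap.id
  | j + 1 => if h : j < p then projSub (LinearMap.ker (A ⟨j, h⟩)) ∘ₗ Tchain m A j
             else Tchain m A j

/-- `T = Q_p ∘ ⋯ ∘ Q_1`. -/
def Tmap {n p : ℕ} (m : Fin p → ℕ)
    (A : ∀ j : Fin p, Euc n →ₗ[ℝ] Euc (m j)) : Euc n →ₗ[ℝ] Euc n :=
  Tchain m A p

/-- `C = I - T`. -/
def Cmap {n p : ℕ} (m : Fin p → ℕ)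
    (A : ∀ j : Fin p, Euc n →ₗ[ℝ] Euc (m j)) : Euc n →ₗ[ℝ] Euc n :=
  LinearMap.id - Tmap m A

/-- The Krylov space `K_k(C, r) = span(r, Cr, …, C^{k-1} r)`. -/
def krylov {n : ℕ} (C : Euc n →ₗ[ℝ] Euc n) (r : Euc n) (k : ℕ) : Submodule ℝ (Euc n) :=
  Submodule.span ℝ {v | ∃ i < k, v = (C ^ i) r}

/-- `z` is the unique minimizer of `‖x - xs‖²` over `S`. -/
def IsUniqueMinimizer {n : ℕ} (xs : Euc n) (S : Set (Euc n)) (z : Euc n) : Prop :=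
  z ∈ S ∧ ∀ y ∈ S, y ≠ z → ‖z - xs‖ ^ 2 < ‖y - xs‖ ^ 2

/-- The affine Krylov space `x₀ + K_k(C, r)` as a set. -/
def affKrylov {n : ℕ} (x0 : Euc n) (C : Euc n →ₗ[ℝ] Euc n) (r : Euc n) (k : ℕ) :
    Set (Euc n) :=
  (fun v => x0 + v) '' (krylov C r k : Set (Euc n))

lemma projSub_mem {n : ℕ} (K : Submodule ℝ (Euc n)) (x : Euc n) : projSub K x ∈ K :=
  (K.orthogonalProjectionOnto x).2

lemma norm_projSub_le {n : ℕ} (K : Submodule ℝ (Euc n)) (x : Euc n) :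
    ‖projSub K x‖ ≤ ‖x‖ := by
  have hp := Submodule.norm_sq_eq_add_norm_sq_projection (𝕜 := ℝ) x K
  rw [show ‖projSub K x‖ = ‖K.orthogonalProjectionOnto x‖ from rfl]
  nlinarith [norm_nonneg x, norm_nonneg (K.orthogonalProjectionOnto x),
    sq_nonneg (‖Kᗮ.orthogonalProjectionOnto x‖)]

lemma projSub_eq_self_of_norm_eq {n : ℕ} (K : Submodule ℝ (Euc n)) (x : Euc n)
    (h : ‖projSub K x‖ = ‖x‖) : projSub K x = x := by
  have hp := Submodule.norm_sq_eq_add_norm_sq_projection (𝕜 := ℝ) x K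
  have h2 : ‖K.orthogonalProjectionOnto x‖ = ‖x‖ := h
  rw [h2] at hp
  have h3sq : ‖Kᗮ.orthogonalProjectionOnto x‖ ^ 2 = 0 := by linarith
  have h3 : ‖Kᗮ.orthogonalProjectionOnto x‖ = 0 := by
    exact pow_eq_zero_iff (two_ne_zero) |>.mp h3sq
  have h4 : ((Kᗮ.orthogonalProjectionOnto x : Euc n)) = 0 := by
    have h5 : ‖(Kᗮ.orthogonalProjectionOnto x : Euc n)‖ = 0 := h3
    exact norm_eq_zero.mp h5
  have h6 : (K.orthogonalProjectionOnto x : Euc n) + (Kᗮ.orthogonalProjectionOnto x : Euc n) = x :=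
    Submodule.starProjection_add_starProjection_orthogonal (K := K) x
  rw [h4, add_zero] at h6
  exact h6

lemma Tchain_norm {n p : ℕ} (msz : Fin p → ℕ)
    (A : ∀ j : Fin p, Euc n →ₗ[ℝ] Euc (msz j)) (x : Euc n) :
    ∀ j, ‖Tchain msz A j x‖ ≤ ‖x‖ ∧
      (‖Tchain msz A j x‖ = ‖x‖ →
        Tchain msz A j x = x ∧ ∀ i : Fin p, (i : ℕ) < j → A i x = 0) := by
  intro j
  induction j with
  | zero =>
    refine ⟨le_refl _, fun _ => ⟨rfl, fun i hi => absurd hi (Nat.not_lt_zero _)⟩⟩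
  | succ j ih =>
    by_cases h : j < p
    · have e : Tchain msz A (j + 1) x
          = projSub (LinearMap.ker (A ⟨j, h⟩)) (Tchain msz A j x) := by
        simp [Tchain, dif_pos h]
      set K := LinearMap.ker (A ⟨j, h⟩)
      set y := Tchain msz A j x with hy
      have hle : ‖projSub K y‖ ≤ ‖y‖ := norm_projSub_le K y
      refine ⟨by rw [e]; exact hle.trans ih.1, fun heq => ?_⟩
      rw [e] at heq
      have hyx : ‖y‖ = ‖x‖ := le_antisymm ih.1 (heq ▸ hle)
      obtain ⟨hyx', hker⟩ := ih.2 hyx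
      rw [hyx'] at heq
      have hQx : projSub K x = x := projSub_eq_self_of_norm_eq K x heq
      have hxK : x ∈ K := hQx ▸ projSub_mem K x
      constructor
      · rw [e, hyx', hQx]
      · intro i hi
        rcases Nat.lt_succ_iff_lt_or_eq.mp hi with h' | h'
        · exact hker i h'
        · have : i = ⟨j, h⟩ := Fin.ext h'
          rw [this]; exact LinearMap.mem_ker.mp hxK
    · have e : Tchain msz A (j + 1) x = Tchain msz A j x := by
        simp [Tchain, dif_neg h]
      rw [e]
      refine ⟨ih.1, fun heq => ⟨(ih.2 heq).1, fun i hi => ?_⟩⟩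
      exact (ih.2 heq).2 i (lt_of_lt_of_le i.isLt (Nat.not_lt.mp h))

lemma fullA_eq_zero {n p : ℕ} (msz : Fin p → ℕ)
    (A : ∀ j : Fin p, Euc n →ₗ[ℝ] Euc (msz j)) (x : Euc n)
    (h : ∀ j, A j x = 0) : fullA msz A x = 0 := by
  have : LinearMap.pi A x = 0 := by
    funext j; simpa using h j
  simp [fullA, this]

lemma Tmap_norm_lt_one {n p : ℕ} (msz : Fin p → ℕ)
    (A : ∀ j : Fin p, Euc n →ₗ[ℝ] Euc (msz j))
    (hrank : LinearMap.ker (fullA msz A) = ⊥) :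
    ‖LinearMap.toContinuousLinearMap (Tmap msz A)‖ < 1 := by
  set L := LinearMap.toContinuousLinearMap (Tmap msz A) with hL
  have hLapp : ∀ x, L x = Tmap msz A x := fun x => rfl
  have hsph : ∀ x : Euc n, ‖x‖ = 1 → ‖L x‖ < 1 := by
    intro x hx
    have h1 := (Tchain_norm msz A x p).1
    have h2 := (Tchain_norm msz A x p).2
    rw [hLapp]
    have : ‖Tmap msz A x‖ ≤ ‖x‖ := h1
    rcases lt_or_eq_of_le this with h | h
    · rwa [hx] at h
    · exfalso
      obtain ⟨_, hker⟩ := h2 h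
      have hz : ∀ j : Fin p, A j x = 0 := fun j => hker j j.isLt
      have : x ∈ LinearMap.ker (fullA msz A) := fullA_eq_zero msz A x hz
      rw [hrank, Submodule.mem_bot] at this
      rw [this, norm_zero] at hx
      norm_num at hx
  rcases subsingleton_or_nontrivial (Euc n) with hs | hs
  · have : L = 0 := by ext x; rw [Subsingleton.elim x 0]; simp
    rw [this, norm_zero]; norm_num
  · obtain ⟨x₀, hx₀, hmax⟩ := (isCompact_sphere (0 : Euc n) 1).exists_isMaxOn
      (NormedSpace.sphere_nonempty.mpr zero_le_one)
      (L.continuous.norm.continuousOn)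
    have hx₀n : ‖x₀‖ = 1 := by simpa using mem_sphere_zero_iff_norm.mp hx₀
    have hM : ‖L x₀‖ < 1 := hsph x₀ hx₀n
    have hb : ‖L‖ ≤ ‖L x₀‖ := by
      refine ContinuousLinearMap.opNorm_le_bound L (norm_nonneg _) (fun x => ?_)
      rcases eq_or_ne x 0 with rfl | hx
      · simp
      · have hxn : ‖x‖ ≠ 0 := norm_ne_zero_iff.mpr hx
        set u : Euc n := ‖x‖⁻¹ • x with hu
        have hun : ‖u‖ = 1 := by
          rw [hu, norm_smul, norm_inv, norm_norm, inv_mul_cancel₀ hxn]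
        have humem : u ∈ Metric.sphere (0 : Euc n) 1 := by
          rw [mem_sphere_zero_iff_norm]; exact hun
        have hle2 : ‖L u‖ ≤ ‖L x₀‖ := hmax humem
        have hLu : ‖L u‖ = ‖x‖⁻¹ * ‖L x‖ := by
          rw [hu, map_smul, norm_smul, norm_inv, norm_norm]
        rw [hLu] at hle2
        have hpos : (0 : ℝ) < ‖x‖ := lt_of_le_of_ne (norm_nonneg _) (Ne.symm hxn)
        calc ‖L x‖ = ‖x‖ * (‖x‖⁻¹ * ‖L x‖) := by field_simp
          _ ≤ ‖x‖ * ‖L x₀‖ := by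
              exact mul_le_mul_of_nonneg_left hle2 (le_of_lt hpos)
          _ = ‖L x₀‖ * ‖x‖ := mul_comm _ _
    exact lt_of_le_of_lt hb hM

lemma nearest_eq {n m : ℕ} (B : Euc n →ₗ[ℝ] Euc m) (c : Euc m) (f : Euc n → Euc n)
    (hf : IsNearestPointMap {z | B z = c} f) (s : Euc n) (hs : B s = c) (x : Euc n) :
    f x = s + projSub (LinearMap.ker B) (x - s) := by
  set K := LinearMap.ker B with hK
  set z := s + projSub K (x - s) with hz
  have hm : B (projSub K (x - s)) = 0 := LinearMap.mem_ker.mp (projSub_mem K (x - s))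
  have hzS : B z = c := by rw [hz, map_add, hs, hm, add_zero]
  have pyth : ∀ y, B y = c → ‖x - y‖ ^ 2 = ‖x - z‖ ^ 2 + ‖z - y‖ ^ 2 := by
    intro y hy
    have h1 : x - z ∈ Kᗮ := by
      have h := Submodule.sub_starProjection_mem_orthogonal (K := K) (x - s)
      have e : x - z = (x - s) - projSub K (x - s) := by rw [hz]; abel
      rw [e]; exact h
    have h2 : z - y ∈ K := by
      have hys : y - s ∈ K := by
        rw [hK, LinearMap.mem_ker, map_sub, hy, hs, sub_self]
      have e : z - y = projSub K (x - s) - (y - s) := by rw [hz]; abel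
      rw [e]; exact K.sub_mem (projSub_mem K (x - s)) hys
    have hinner : ⟪x - z, z - y⟫ = 0 := by
      rw [real_inner_comm]
      exact (Submodule.mem_orthogonal K (x - z)).mp h1 (z - y) h2
    have e : x - y = (x - z) + (z - y) := by abel
    rw [e, norm_add_sq_real, hinner]; ring
  obtain ⟨hwS, hwmin⟩ := hf x
  have hle : dist x (f x) ≤ dist x z := hwmin z hzS
  have hpy := pyth (f x) hwS
  rw [dist_eq_norm, dist_eq_norm] at hle
  have hn : ‖z - f x‖ = 0 := by
    nlinarith [norm_nonneg (z - f x), norm_nonneg (x - f x), norm_nonneg (x - z)]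
  exact (sub_eq_zero.mp (norm_eq_zero.mp hn)).symm



lemma chainK_affine {n p : ℕ} (msz : Fin p → ℕ)
    (A : ∀ j : Fin p, Euc n →ₗ[ℝ] Euc (msz j)) (b : ∀ j : Fin p, Euc (msz j))
    (Pj : Fin p → Euc n → Euc n)
    (hPj : ∀ j : Fin p, IsNearestPointMap {z : Euc n | A j z = b j} (Pj j))
    (s : Euc n) (hs : ∀ j, A j s = b j) (x : Euc n) :
    ∀ j, chainK Pj x j = Tchain msz A j x + chainK Pj (0 : Euc n) j := by
  intro j
  induction j with
  | zero => simp [chainK, Tchain]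
  | succ j ih =>
    by_cases h : j < p
    · have hP := nearest_eq (A ⟨j, h⟩) (b ⟨j, h⟩) (Pj ⟨j, h⟩) (hPj ⟨j, h⟩) s (hs ⟨j, h⟩)
      have e1 : chainK Pj x (j + 1) = Pj ⟨j, h⟩ (chainK Pj x j) := by
        simp [chainK, dif_pos h]
      have e2 : chainK Pj (0 : Euc n) (j + 1) = Pj ⟨j, h⟩ (chainK Pj (0 : Euc n) j) := by
        simp [chainK, dif_pos h]
      have e3 : Tchain msz A (j + 1) x
          = projSub (LinearMap.ker (A ⟨j, h⟩)) (Tchain msz A j x) := by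
        simp [Tchain, dif_pos h]
      set Q := projSub (LinearMap.ker (A ⟨j, h⟩)) with hQ
      rw [e1, e2, e3, ih, hP, hP]
      have e4 : Tchain msz A j x + chainK Pj 0 j - s
          = Tchain msz A j x + (chainK Pj 0 j - s) := by abel
      rw [e4, map_add]
      abel
    · have e1 : chainK Pj x (j + 1) = chainK Pj x j := by simp [chainK, dif_neg h]
      have e2 : chainK Pj (0 : Euc n) (j + 1) = chainK Pj (0 : Euc n) j := by
        simp [chainK, dif_neg h]
      have e3 : Tchain msz A (j + 1) x = Tchain msz A j x := by simp [Tchain, dif_neg h]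
      rw [e1, e2, e3, ih]

lemma chainK_fixed {n p : ℕ} (msz : Fin p → ℕ)
    (A : ∀ j : Fin p, Euc n →ₗ[ℝ] Euc (msz j)) (b : ∀ j : Fin p, Euc (msz j))
    (Pj : Fin p → Euc n → Euc n)
    (hPj : ∀ j : Fin p, IsNearestPointMap {z : Euc n | A j z = b j} (Pj j))
    (xs : Euc n) (hxs : ∀ j, A j xs = b j) :
    ∀ j, chainK Pj xs j = xs := by
  intro j
  induction j with
  | zero => rfl
  | succ j ih =>
    by_cases h : j < p
    · have e1 : chainK Pj xs (j + 1) = Pj ⟨j, h⟩ (chainK Pj xs j) := by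
        simp [chainK, dif_pos h]
      rw [e1, ih]
      obtain ⟨hmem, hmin⟩ := hPj ⟨j, h⟩ xs
      have h0 : dist xs (Pj ⟨j, h⟩ xs) ≤ dist xs xs := hmin xs (hxs ⟨j, h⟩)
      rw [dist_self] at h0
      have := le_antisymm h0 dist_nonneg
      exact (dist_eq_zero.mp this).symm
    · have e1 : chainK Pj xs (j + 1) = chainK Pj xs j := by simp [chainK, dif_neg h]
      rw [e1, ih]

theorem stmt14
    {n p : ℕ} (msz : Fin p → ℕ)
    (A : ∀ j : Fin p, Euc n →ₗ[ℝ] Euc (msz j))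
    (b : ∀ j : Fin p, Euc (msz j))
    (hcons : ∃ z : Euc n, ∀ j, A j z = b j)
    (Pj : Fin p → Euc n → Euc n)
    (hPj : ∀ j : Fin p, IsNearestPointMap {z : Euc n | A j z = b j} (Pj j))
    (hrank : LinearMap.ker (fullA msz A) = ⊥)
    (xs : Euc n) (hxs : ∀ j, A j xs = b j)
    (x0 : Euc n) (k : ℕ) (xk : Euc n)
    (hxk : xk ∈ affKrylov x0 (Cmap msz A) (kacz Pj (0 : Euc n) - Cmap msz A x0) k)
    (hminres : ∀ u ∈ affKrylov x0 (Cmap msz A) (kacz Pj (0 : Euc n) - Cmap msz A x0) k,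
      ‖xk - kacz Pj xk‖ ≤ ‖u - kacz Pj u‖) :
    ∀ u ∈ affKrylov x0 (Cmap msz A) (kacz Pj (0 : Euc n) - Cmap msz A x0) k,
      ‖xk - xs‖ ≤
        ((1 + ‖LinearMap.toContinuousLinearMap (Tmap msz A)‖) /
          (1 - ‖LinearMap.toContinuousLinearMap (Tmap msz A)‖)) * ‖u - xs‖ := by
  intro u hu
  obtain ⟨s, hs⟩ := hcons
  set T := Tmap msz A with hT
  set L := LinearMap.toContinuousLinearMap T with hL
  have hLapp : ∀ v, L v = T v := fun v => rfl
  set η := ‖L‖ with hη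
  have hη1 : η < 1 := Tmap_norm_lt_one msz A hrank
  have hη0 : 0 ≤ η := norm_nonneg _
  have hpos : (0 : ℝ) < 1 - η := by linarith
  -- affine structure of kacz
  have haff : ∀ x : Euc n, kacz Pj x = T x + kacz Pj (0 : Euc n) := fun x =>
    chainK_affine msz A b Pj hPj s hs x p
  have hfix : kacz Pj xs = xs := chainK_fixed msz A b Pj hPj xs hxs p
  -- x - kacz x = (x - xs) - T (x - xs)
  have hres : ∀ x : Euc n, x - kacz Pj x = (x - xs) - T (x - xs) := by
    intro x
    have h1 := haff x
    have h2 := haff xs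
    rw [hfix] at h2
    have hg : kacz Pj (0 : Euc n) = xs - T xs := eq_sub_of_add_eq' h2.symm
    rw [h1, hg, map_sub]
    abel
  have hTle : ∀ v : Euc n, ‖T v‖ ≤ η * ‖v‖ := by
    intro v
    have := L.le_opNorm v
    rwa [hLapp] at this
  have hlow : ∀ v : Euc n, (1 - η) * ‖v‖ ≤ ‖v - T v‖ := by
    intro v
    have h1 : ‖v‖ ≤ ‖v - T v‖ + ‖T v‖ := by
      calc ‖v‖ = ‖(v - T v) + T v‖ := by rw [sub_add_cancel]
        _ ≤ ‖v - T v‖ + ‖T v‖ := norm_add_le _ _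
    have h2 := hTle v
    nlinarith
  have hhigh : ∀ v : Euc n, ‖v - T v‖ ≤ (1 + η) * ‖v‖ := by
    intro v
    have h1 : ‖v - T v‖ ≤ ‖v‖ + ‖T v‖ := norm_sub_le _ _
    have h2 := hTle v
    nlinarith
  have key1 : (1 - η) * ‖xk - xs‖ ≤ ‖xk - kacz Pj xk‖ := by
    rw [hres xk]; exact hlow (xk - xs)
  have key2 := hminres u hu
  have key3 : ‖u - kacz Pj u‖ ≤ (1 + η) * ‖u - xs‖ := by
    rw [hres u]; exact hhigh (u - xs)
  have hchain : (1 - η) * ‖xk - xs‖ ≤ (1 + η) * ‖u - xs‖ := by linarith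
  rw [div_mul_eq_mul_div, le_div_iff₀ hpos]
  nlinarith

end
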